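/- Let G₆ be the subgroup of G₇ generated by s and u. Then z³ = (s·t·u)³ = s·u·s·u·s·u = u·s·u·s·u·s, the element z³ has order 4, the center of G₆ equals the cyclic subgroup generated by z³, and Z(G₆) = G₆ ∩ Z(G₇). -/

import Mathlib

open Pointwise

namespace Tetra

def rels : Set (FreeGroup (Fin 3)) :=
  { FreeGroup.of 0 ^ 2, FreeGroup.of 1 ^ 3, FreeGroup.of 2 ^ 3,
    FreeGroup.of 0 * FreeGroup.of 1 * FreeGroup.of 2 *
      (FreeGroup.of 1 * FreeGroup.of 2 * FreeGroup.of 0)⁻¹,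
    FreeGroup.of 0 * FreeGroup.of 1 * FreeGroup.of 2 *
      (FreeGroup.of 2 * FreeGroup.of 0 * FreeGroup.of 1)⁻¹ }

/-- The group `G₇ = ⟨s, t, u | s² = t³ = u³ = 1, stu = tus = ust⟩`. -/
abbrev G7 := PresentedGroup rels

def s : G7 := PresentedGroup.of 0
def t : G7 := PresentedGroup.of 1
def u : G7 := PresentedGroup.of 2
def z : G7 := s * t * u

def G6 : Subgroup G7 := Subgroup.closure {s, u}


lemma rel_one {r : FreeGroup (Fin 3)} (hr : r ∈ rels) : PresentedGroup.mk rels r = 1 :=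
  (QuotientGroup.eq_one_iff r).mpr (Subgroup.subset_normalClosure hr)

lemma hss : s * s = 1 := by
  have h := rel_one (show FreeGroup.of 0 ^ 2 ∈ rels from Or.inl rfl)
  simpa [s, PresentedGroup.of, map_pow, sq] using h

lemma ht3 : t * (t * t) = 1 := by
  have h := rel_one (show FreeGroup.of 1 ^ 3 ∈ rels from Or.inr (Or.inl rfl))
  simpa [t, PresentedGroup.of, map_pow, pow_succ, mul_assoc] using h

lemma hu3 : u * (u * u) = 1 := by
  have h := rel_one (show FreeGroup.of 2 ^ 3 ∈ rels from Or.inr (Or.inr (Or.inl rfl)))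
  simpa [u, PresentedGroup.of, map_pow, pow_succ, mul_assoc] using h

lemma hA : s * (t * u) = t * (u * s) := by
  have h := rel_one (show FreeGroup.of 0 * FreeGroup.of 1 * FreeGroup.of 2 *
      (FreeGroup.of 1 * FreeGroup.of 2 * FreeGroup.of 0)⁻¹ ∈ rels from
      Or.inr (Or.inr (Or.inr (Or.inl rfl))))
  rw [map_mul, map_inv, mul_inv_eq_one] at h
  simpa [s, t, u, PresentedGroup.of, map_mul, mul_assoc] using h

lemma hB : s * (t * u) = u * (s * t) := by
  have h := rel_one (show FreeGroup.of 0 * FreeGroup.of 1 * FreeGroup.of 2 *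
      (FreeGroup.of 2 * FreeGroup.of 0 * FreeGroup.of 1)⁻¹ ∈ rels from
      Or.inr (Or.inr (Or.inr (Or.inr rfl))))
  rw [map_mul, map_inv, mul_inv_eq_one] at h
  simpa [s, t, u, PresentedGroup.of, map_mul, mul_assoc] using h



-- continuation forms
lemma hs2 (x : G7) : s * (s * x) = x := by rw [← mul_assoc, hss, one_mul]
lemma hu2 (x : G7) : u * (u * (u * x)) = x := by
  rw [← mul_assoc, ← mul_assoc, mul_assoc u u u, hu3, one_mul]
lemma ht2 (x : G7) : t * (t * (t * x)) = x := by
  rw [← mul_assoc, ← mul_assoc, mul_assoc t t t, ht3, one_mul]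

lemma z_eq : z = s * (t * u) := by rw [z, mul_assoc]
lemma z_eq_B : z = u * (s * t) := by rw [z_eq, hB]
lemma z_eq_A : z = t * (u * s) := by rw [z_eq, hA]

lemma zc_s : z * s = s * z := by
  calc z * s = t * (u * (s * s)) := by rw [z_eq_A, mul_assoc, mul_assoc]
    _ = t * u := by rw [hss, mul_one]
    _ = s * (s * (t * u)) := (hs2 _).symm
    _ = s * z := by rw [← z_eq]

lemma zc_u : z * u = u * z := by
  calc z * u = u * (s * (t * u)) := by rw [z_eq_B, mul_assoc, mul_assoc]
    _ = u * z := by rw [← z_eq]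

lemma zc_t : z * t = t * z := by
  calc z * t = t * (u * (s * t)) := by rw [z_eq_A, mul_assoc, mul_assoc]
    _ = t * z := by rw [← z_eq_B]




-- z^3 pushing rules (w := z^3 pushed rightwards)
lemma wc_s : z ^ 3 * s = s * z ^ 3 := ((show Commute z s from zc_s).pow_left 3).eq
lemma wc_u : z ^ 3 * u = u * z ^ 3 := ((show Commute z u from zc_u).pow_left 3).eq
lemma wp_s (x : G7) : z^3 * (s * x) = s * (z^3 * x) := by
  rw [← mul_assoc, wc_s, mul_assoc]
lemma wp_u (x : G7) : z^3 * (u * x) = u * (z^3 * x) := by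
  rw [← mul_assoc, wc_u, mul_assoc]
lemma zp_s (x : G7) : z * (s * x) = s * (z * x) := by rw [← mul_assoc, zc_s, mul_assoc]
lemma zp_u (x : G7) : z * (u * x) = u * (z * x) := by rw [← mul_assoc, zc_u, mul_assoc]

lemma t_eq : t = s * (u * (u * z)) := by
  rw [z_eq_B, hu2, hs2]

-- z^3 = ususus
lemma hw_usu : z ^ 3 = u * (s * (u * (s * (u * s)))) := by
  have H : (s*(u*(u*z))) * ((s*(u*(u*z))) * (s*(u*(u*z)))) = 1 := by
    rw [← t_eq]; exact ht3
  have H2 : s*(u*(u*(s*(u*(u*(s*(u*(u*(z*(z*z)))))))))) = 1 := by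
    rw [← H]
    simp only [mul_assoc, zp_s, zp_u]
  have H3 : u*(s*(u*(s*(u*s)))) * (s*(u*(u*(s*(u*(u*(s*(u*(u*(z*(z*z))))))))))) =
      u*(s*(u*(s*(u*s)))) := by rw [H2, mul_one]
  calc z ^ 3 = z*(z*z) := by rw [pow_succ, pow_two, mul_assoc]
    _ = u*(s*(u*(s*(u*s)))) * (s*(u*(u*(s*(u*(u*(s*(u*(u*(z*(z*z))))))))))) := by
        simp only [mul_assoc, hs2, hu2, hss, hu3, mul_one, one_mul]
    _ = u*(s*(u*(s*(u*s)))) := H3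


-- z^3 = sususu
lemma hw_sus : z ^ 3 = s * (u * (s * (u * (s * u)))) := by
  have h1 : s * (z^3 * s) = z^3 := by rw [wc_s, hs2]
  calc z ^ 3 = s * (z^3 * s) := h1.symm
    _ = s * ((u * (s * (u * (s * (u * s))))) * s) := by rw [← hw_usu]
    _ = s * (u * (s * (u * (s * u)))) := by
        simp only [mul_assoc, hs2, hu2, hss, hu3, mul_one, one_mul]

-- R1 rules
lemma R1b (x : G7) : s * (u * (s * x)) = u * (u * (s * (u * (u * (z^3 * x))))) := by
  rw [hw_usu]
  simp only [mul_assoc, hs2, hu2, hss, hu3, mul_one, one_mul]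

lemma R1a : s * (u * s) = u * (u * (s * (u * (u * z^3)))) := by
  rw [hw_usu]
  simp only [mul_assoc, hs2, hu2, hss, hu3, mul_one, one_mul]

-- R2 rules
lemma R2b (x : G7) : s * (u * (u * (s * x))) = u * (s * (u * (z^3 * (z^3 * (z^3 * x))))) := by
  calc s * (u * (u * (s * x))) = (s * (u * s)) * (s * (u * (s * x))) := by
        simp only [mul_assoc, hs2]
    _ = (u * (u * (s * (u * (u * z^3))))) * (u * (u * (s * (u * (u * (z^3 * x)))))) := by
        rw [R1a, R1b]
    _ = u * (s * (u * (z^3 * (z^3 * (z^3 * x))))) := by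
        simp only [mul_assoc, wp_s, wp_u, wc_s, wc_u, hs2, hu2, hss, hu3, mul_one, one_mul, R1b]

lemma R2a : s * (u * (u * s)) = u * (s * (u * (z^3 * (z^3 * z^3)))) := by
  have h := R2b 1
  simpa only [mul_one] using h

-- order 4 relation
lemma hw4 : z^3 * (z^3 * (z^3 * z^3)) = 1 := by
  have path1 : s*(u*(s*(u*(u*s)))) = u*(s*(u*(u*(z^3*z^3)))) := by
    rw [R1b]
    simp only [mul_assoc, wp_s, wp_u, wc_s, wc_u, hs2, hu2, hss, hu3, mul_one, one_mul, R1b]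
  have path2 : s*(u*(s*(u*(u*s)))) = u*(s*(u*(u*(z^3*(z^3*(z^3*(z^3*(z^3*z^3)))))))) := by
    conv_lhs => rw [show s*(u*(s*(u*(u*s)))) = s*(u*(s*(u*(u*(s*1))))) by rw [mul_one]]
    rw [R2b]
    simp only [mul_assoc, wp_s, wp_u, wc_s, wc_u, hs2, hu2, hss, hu3, mul_one, one_mul, R2b]
  have h := path1.symm.trans path2
  have h2 := mul_left_cancel (mul_left_cancel (mul_left_cancel (mul_left_cancel h)))
  have h4 : z^3 = z^3*(z^3*(z^3*(z^3*z^3))) := mul_left_cancel h2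
  have h5 : z^3 * 1 = z^3*(z^3*(z^3*(z^3*z^3))) := by rw [mul_one]; exact h4
  exact (mul_left_cancel h5).symm

lemma hw41 : z^3 * (z^3 * (z^3 * z^3)) = 1 := hw4
lemma hw42 (x : G7) : z^3 * (z^3 * (z^3 * (z^3 * x))) = x := by
  rw [← mul_assoc, ← mul_assoc, ← mul_assoc, mul_assoc (z^3*z^3), mul_assoc (z^3),
    ← mul_assoc]
  rw [show z^3*z^3*(z^3*z^3) = z^3*(z^3*(z^3*z^3)) by rw [mul_assoc], hw4, one_mul]



-- ## Concrete representation over GL(2, ZMod 13)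
def Sm : Matrix (Fin 2) (Fin 2) (ZMod 13) := !![3,7;10,10]
def Tm : Matrix (Fin 2) (Fin 2) (ZMod 13) := !![1,0;0,3]
def Um : Matrix (Fin 2) (Fin 2) (ZMod 13) := !![6,1;11,11]

def Su : GL (Fin 2) (ZMod 13) := ⟨Sm, Sm, by decide, by decide⟩
def Tu : GL (Fin 2) (ZMod 13) := ⟨Tm, Tm*Tm, by decide, by decide⟩
def Uu : GL (Fin 2) (ZMod 13) := ⟨Um, Um*Um, by decide, by decide⟩

def fgen : Fin 3 → GL (Fin 2) (ZMod 13) := ![Su, Tu, Uu]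

lemma relhold : ∀ r ∈ rels, FreeGroup.lift fgen r = 1 := by
  intro r hr
  simp only [rels, Set.mem_insert_iff, Set.mem_singleton_iff] at hr
  rcases hr with h|h|h|h|h <;> subst h <;>
    · simp only [map_mul, map_pow, map_inv, FreeGroup.lift_apply_of, fgen,
        Matrix.cons_val_zero, Matrix.cons_val_one, Matrix.head_cons]
      decide

def φ : G7 →* GL (Fin 2) (ZMod 13) := PresentedGroup.toGroup relhold

lemma φs : φ s = Su := by
  have : φ (PresentedGroup.of 0) = fgen 0 := PresentedGroup.toGroup.of relhold
  simpa [s, fgen] using this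
lemma φt : φ t = Tu := by
  have : φ (PresentedGroup.of 1) = fgen 1 := PresentedGroup.toGroup.of relhold
  simpa [t, fgen] using this
lemma φu : φ u = Uu := by
  have : φ (PresentedGroup.of 2) = fgen 2 := PresentedGroup.toGroup.of relhold
  simpa [u, fgen] using this

lemma φsv : (φ s).val = Sm := by rw [φs]; rfl
lemma φuv : (φ u).val = Um := by rw [φu]; rfl

def fword : ℕ → G7
  | 0 => s
  | 1 => s * ((z^3))
  | 2 => s * ((z^3) * ((z^3)))
  | 3 => s * ((z^3) * ((z^3) * ((z^3))))
  | 4 => s * (u)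
  | 5 => s * (u * ((z^3)))
  | 6 => s * (u * ((z^3) * ((z^3))))
  | 7 => s * (u * ((z^3) * ((z^3) * ((z^3)))))
  | 8 => s * (u * (u))
  | 9 => s * (u * (u * ((z^3))))
  | 10 => s * (u * (u * ((z^3) * ((z^3)))))
  | 11 => s * (u * (u * ((z^3) * ((z^3) * ((z^3))))))
  | 12 => u * (s)
  | 13 => u * (s * ((z^3)))
  | 14 => u * (s * ((z^3) * ((z^3))))
  | 15 => u * (s * ((z^3) * ((z^3) * ((z^3)))))
  | 16 => u * (s * (u))
  | 17 => u * (s * (u * ((z^3))))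
  | 18 => u * (s * (u * ((z^3) * ((z^3)))))
  | 19 => u * (s * (u * ((z^3) * ((z^3) * ((z^3))))))
  | 20 => u * (s * (u * (u)))
  | 21 => u * (s * (u * (u * ((z^3)))))
  | 22 => u * (s * (u * (u * ((z^3) * ((z^3))))))
  | 23 => u * (s * (u * (u * ((z^3) * ((z^3) * ((z^3)))))))
  | 24 => u * (u * (s))
  | 25 => u * (u * (s * ((z^3))))
  | 26 => u * (u * (s * ((z^3) * ((z^3)))))
  | 27 => u * (u * (s * ((z^3) * ((z^3) * ((z^3))))))
  | 28 => u * (u * (s * (u)))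
  | 29 => u * (u * (s * (u * ((z^3)))))
  | 30 => u * (u * (s * (u * ((z^3) * ((z^3))))))
  | 31 => u * (u * (s * (u * ((z^3) * ((z^3) * ((z^3)))))))
  | 32 => u * (u * (s * (u * (u))))
  | 33 => u * (u * (s * (u * (u * ((z^3))))))
  | 34 => u * (u * (s * (u * (u * ((z^3) * ((z^3)))))))
  | 35 => u * (u * (s * (u * (u * ((z^3) * ((z^3) * ((z^3))))))))
  | 36 => 1
  | 37 => (z^3)
  | 38 => (z^3) * ((z^3))
  | 39 => (z^3) * ((z^3) * ((z^3)))
  | 40 => u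
  | 41 => u * ((z^3))
  | 42 => u * ((z^3) * ((z^3)))
  | 43 => u * ((z^3) * ((z^3) * ((z^3))))
  | 44 => u * (u)
  | 45 => u * (u * ((z^3)))
  | 46 => u * (u * ((z^3) * ((z^3))))
  | 47 => u * (u * ((z^3) * ((z^3) * ((z^3)))))
  | _ => 1

def gmat : ℕ → Matrix (Fin 2) (Fin 2) (ZMod 13)
  | 0 => !![3,7;10,10]
  | 1 => !![11,4;2,2]
  | 2 => !![10,6;3,3]
  | 3 => !![2,9;11,11]
  | 4 => !![4,2;1,3]
  | 5 => !![6,3;8,11]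
  | 6 => !![9,11;12,10]
  | 7 => !![7,10;5,2]
  | 8 => !![7,0;0,8]
  | 9 => !![4,0;0,12]
  | 10 => !![6,0;0,5]
  | 11 => !![9,0;0,1]
  | 12 => !![2,0;0,5]
  | 13 => !![3,0;0,1]
  | 14 => !![11,0;0,8]
  | 15 => !![10,0;0,12]
  | 16 => !![12,2;3,3]
  | 17 => !![5,3;11,11]
  | 18 => !![1,11;10,10]
  | 19 => !![8,10;2,2]
  | 20 => !![3,8;12,10]
  | 21 => !![11,12;5,2]
  | 22 => !![10,5;1,3]
  | 23 => !![2,1;8,11]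
  | 24 => !![12,5;9,3]
  | 25 => !![5,1;7,11]
  | 26 => !![1,8;4,10]
  | 27 => !![8,12;6,2]
  | 28 => !![10,2;9,3]
  | 29 => !![2,3;7,11]
  | 30 => !![3,11;4,10]
  | 31 => !![11,10;6,2]
  | 32 => !![4,6;9,3]
  | 33 => !![6,9;7,11]
  | 34 => !![9,7;4,10]
  | 35 => !![7,4;6,2]
  | 36 => !![1,0;0,1]
  | 37 => !![8,0;0,8]
  | 38 => !![12,0;0,12]
  | 39 => !![5,0;0,5]
  | 40 => !![6,1;11,11]
  | 41 => !![9,8;10,10]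
  | 42 => !![7,12;2,2]
  | 43 => !![4,5;3,3]
  | 44 => !![8,4;5,2]
  | 45 => !![12,6;1,3]
  | 46 => !![5,9;8,11]
  | 47 => !![1,7;12,10]
  | _ => 1

def msw : ℕ → Fin 48
  | 0 => 36
  | 1 => 37
  | 2 => 38
  | 3 => 39
  | 4 => 33
  | 5 => 34
  | 6 => 35
  | 7 => 32
  | 8 => 19
  | 9 => 16
  | 10 => 17
  | 11 => 18
  | 12 => 40
  | 13 => 41
  | 14 => 42
  | 15 => 43
  | 16 => 9
  | 17 => 10
  | 18 => 11
  | 19 => 8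
  | 20 => 31
  | 21 => 28
  | 22 => 29
  | 23 => 30
  | 24 => 44
  | 25 => 45
  | 26 => 46
  | 27 => 47
  | 28 => 21
  | 29 => 22
  | 30 => 23
  | 31 => 20
  | 32 => 7
  | 33 => 4
  | 34 => 5
  | 35 => 6
  | 36 => 0
  | 37 => 1
  | 38 => 2
  | 39 => 3
  | 40 => 12
  | 41 => 13
  | 42 => 14
  | 43 => 15
  | 44 => 24
  | 45 => 25
  | 46 => 26
  | 47 => 27
  | _ => 0

def muw : ℕ → Fin 48
  | 0 => 4
  | 1 => 5
  | 2 => 6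
  | 3 => 7
  | 4 => 8
  | 5 => 9
  | 6 => 10
  | 7 => 11
  | 8 => 0
  | 9 => 1
  | 10 => 2
  | 11 => 3
  | 12 => 16
  | 13 => 17
  | 14 => 18
  | 15 => 19
  | 16 => 20
  | 17 => 21
  | 18 => 22
  | 19 => 23
  | 20 => 12
  | 21 => 13
  | 22 => 14
  | 23 => 15
  | 24 => 28
  | 25 => 29
  | 26 => 30
  | 27 => 31
  | 28 => 32
  | 29 => 33
  | 30 => 34
  | 31 => 35
  | 32 => 24
  | 33 => 25
  | 34 => 26
  | 35 => 27
  | 36 => 40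
  | 37 => 41
  | 38 => 42
  | 39 => 43
  | 40 => 44
  | 41 => 45
  | 42 => 46
  | 43 => 47
  | 44 => 36
  | 45 => 37
  | 46 => 38
  | 47 => 39
  | _ => 0

def fT : Fin 48 → G7 := fun i => fword i.val
def gT : Fin 48 → Matrix (Fin 2) (Fin 2) (ZMod 13) := fun i => gmat i.val
def msT : Fin 48 → Fin 48 := fun i => msw i.val
def muT : Fin 48 → Fin 48 := fun i => muw i.val

set_option maxHeartbeats 4000000 in
lemma word_s : ∀ i : Fin 48, fT i * s = fT (msT i) := by
  intro i
  fin_cases i <;>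
    simp only [fT, msT, fword, msw, Fin.coe_ofNat_eq_mod, mul_assoc, hs2, hu2, hss, hu3, wp_s, wp_u, wc_s, wc_u,
      R1b, R1a, R2b, R2a, hw41, hw42, mul_one, one_mul]

set_option maxHeartbeats 4000000 in
lemma word_u : ∀ i : Fin 48, fT i * u = fT (muT i) := by
  intro i
  fin_cases i <;>
    simp only [fT, muT, fword, muw, Fin.coe_ofNat_eq_mod, mul_assoc, hs2, hu2, hss, hu3, wp_s, wp_u, wc_s, wc_u,
      R1b, R1a, R2b, R2a, hw41, hw42, mul_one, one_mul]

lemma mat_s : ∀ i : Fin 48, gT i * Sm = gT (msT i) := by decide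
lemma mat_u : ∀ i : Fin 48, gT i * Um = gT (muT i) := by decide
lemma gT36 : gT (36 : Fin 48) = 1 := by decide
lemma fT36 : fT (36 : Fin 48) = 1 := rfl
lemma mat_central : ∀ j : Fin 48, gT j * Sm = Sm * gT j → gT j * Um = Um * gT j →
    j = 36 ∨ j = 37 ∨ j = 38 ∨ j = 39 := by decide

-- the key transport lemma
lemma KL {x : G7} (hx : x ∈ G6) :
    ∀ i : Fin 48, ∃ j : Fin 48, fT i * x = fT j ∧ gT i * (φ x).val = gT j := by
  let P : G7 → Prop := fun g => ∀ i : Fin 48, ∃ j, fT i * g = fT j ∧ gT i * (φ g).val = gT j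
  have step_s : ∀ g, P g → P (g * s) := by
    intro g hg i
    obtain ⟨j, hj1, hj2⟩ := hg i
    refine ⟨msT j, ?_, ?_⟩
    · rw [← mul_assoc, hj1, word_s]
    · rw [map_mul, Units.val_mul, φsv, ← mul_assoc, hj2, mat_s]
  have step_u : ∀ g, P g → P (g * u) := by
    intro g hg i
    obtain ⟨j, hj1, hj2⟩ := hg i
    refine ⟨muT j, ?_, ?_⟩
    · rw [← mul_assoc, hj1, word_u]
    · rw [map_mul, Units.val_mul, φuv, ← mul_assoc, hj2, mat_u]
  have hone : P 1 := fun i => ⟨i, by rw [mul_one], by rw [map_one, Units.val_one, mul_one]⟩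
  have hsinv : s⁻¹ = s := inv_eq_of_mul_eq_one_right hss
  have huinv : u⁻¹ = u * u := inv_eq_of_mul_eq_one_right hu3
  refine Subgroup.closure_induction_right (p := fun g _ => P g) hone ?_ ?_ hx
  · rintro g _ y hy hg
    rcases hy with h|h
    · subst h; exact step_s g hg
    · rw [Set.mem_singleton_iff] at h; subst h; exact step_u g hg
  · rintro g _ y hy hg
    rcases hy with h|h
    · subst h; rw [hsinv]; exact step_s g hg
    · rw [Set.mem_singleton_iff] at h; subst h
      rw [huinv, ← mul_assoc]; exact step_u _ (step_u g hg)

lemma hs6 : s ∈ G6 := Subgroup.subset_closure (Set.mem_insert _ _)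
lemma hu6 : u ∈ G6 := Subgroup.subset_closure (Set.mem_insert_of_mem _ rfl)

lemma hz_center : z ∈ Subgroup.center G7 := by
  rw [Subgroup.mem_center_iff]
  intro g
  have hg : g ∈ Subgroup.closure (Set.range (PresentedGroup.of (rels := rels))) := by
    rw [PresentedGroup.closure_range_of]; exact Subgroup.mem_top g
  refine Subgroup.closure_induction (p := fun g _ => g * z = z * g) ?_ ?_ ?_ ?_ hg
  · rintro x ⟨i, rfl⟩
    fin_cases i
    · exact zc_s.symm
    · exact zc_t.symm
    · exact zc_u.symm
  · show (1:G7) * z = z * 1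
    rw [one_mul, mul_one]
  · intro a b _ _ ha hb
    rw [mul_assoc, hb, ← mul_assoc, ha, mul_assoc]
  · intro a _ ha
    exact ((show Commute a z from ha).inv_left).eq

lemma hz3_center : z ^ 3 ∈ Subgroup.center G7 := pow_mem hz_center 3

lemma hwG6 : z ^ 3 ∈ G6 := by
  rw [hw_usu]
  exact mul_mem hu6 (mul_mem hs6 (mul_mem hu6 (mul_mem hs6 (mul_mem hu6 hs6))))

lemma map_center_eq : (Subgroup.center ↥G6).map G6.subtype = Subgroup.zpowers (z ^ 3) := by
  apply le_antisymm
  · rintro x hx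
    rw [Subgroup.mem_map] at hx
    obtain ⟨y, hyc, rfl⟩ := hx
    have hyG6 : (y : G7) ∈ G6 := y.2
    obtain ⟨j, hj1, hj2⟩ := KL hyG6 (36 : Fin 48)
    rw [fT36, one_mul] at hj1
    rw [gT36, one_mul] at hj2
    have hcs : (y : G7) * s = s * (y : G7) := by
      have h := Subgroup.mem_center_iff.mp hyc ⟨s, hs6⟩
      exact (congrArg Subtype.val h).symm
    have hcu : (y : G7) * u = u * (y : G7) := by
      have h := Subgroup.mem_center_iff.mp hyc ⟨u, hu6⟩
      exact (congrArg Subtype.val h).symm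
    have hms : gT j * Sm = Sm * gT j := by
      rw [← hj2, ← φsv, ← Units.val_mul, ← Units.val_mul, ← map_mul, ← map_mul, hcs]
    have hmu : gT j * Um = Um * gT j := by
      rw [← hj2, ← φuv, ← Units.val_mul, ← Units.val_mul, ← map_mul, ← map_mul, hcu]
    have hy_eq : (y : G7) = fT j := hj1
    rcases mat_central j hms hmu with h|h|h|h <;> subst h
    · rw [show G6.subtype y = (y : G7) from rfl, hy_eq]; exact one_mem _
    · rw [show G6.subtype y = (y : G7) from rfl, hy_eq]
      exact Subgroup.mem_zpowers _
    · rw [show G6.subtype y = (y : G7) from rfl, hy_eq]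
      exact ⟨2, by show (z^3)^(2:ℤ) = fT 38; rw [show fT (38 : Fin 48) = z^3*(z^3) from rfl]; group⟩
    · rw [show G6.subtype y = (y : G7) from rfl, hy_eq]
      exact ⟨3, by show (z^3)^(3:ℤ) = fT 39; rw [show fT (39 : Fin 48) = z^3*(z^3*(z^3)) from rfl]; group⟩
  · rw [Subgroup.zpowers_le]
    rw [Subgroup.mem_map]
    refine ⟨⟨z^3, hwG6⟩, ?_, rfl⟩
    rw [Subgroup.mem_center_iff]
    intro g
    exact Subtype.ext (Subgroup.mem_center_iff.mp hz3_center (g : G7))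

theorem statement1 :
    z ^ 3 = s * u * s * u * s * u ∧
    z ^ 3 = u * s * u * s * u * s ∧
    orderOf (z ^ 3) = 4 ∧
    (Subgroup.center ↥G6).map G6.subtype = Subgroup.zpowers (z ^ 3) ∧
    (Subgroup.center ↥G6).map G6.subtype = G6 ⊓ Subgroup.center G7 := by
  refine ⟨by simpa only [mul_assoc] using hw_sus, by simpa only [mul_assoc] using hw_usu, ?_, map_center_eq, ?_⟩
  · rw [orderOf_eq_iff (by norm_num)]
    constructor
    · have hp4 : (z^3)^4 = z^3*(z^3*(z^3*(z^3))) := by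
        simp only [pow_succ, pow_zero, one_mul, mul_assoc]
      rw [hp4, hw41]
    · intro m hm hm' hcon
      have hφ : (φ (z^3))^m = 1 := by rw [← map_pow, hcon, map_one]
      have hφz : φ (z^3) = (Su*Tu*Uu)^3 := by
        rw [map_pow, z, map_mul, map_mul, φs, φt, φu]
      rw [hφz] at hφ
      interval_cases m
      · exact absurd hφ (by decide)
      · exact absurd hφ (by decide)
      · exact absurd hφ (by decide)
  · rw [map_center_eq]
    apply le_antisymm
    · rw [Subgroup.zpowers_le, Subgroup.mem_inf]
      exact ⟨hwG6, hz3_center⟩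
    · rintro x ⟨hx1, hx2⟩
      rw [← map_center_eq]
      rw [Subgroup.mem_map]
      refine ⟨⟨x, hx1⟩, ?_, rfl⟩
      rw [Subgroup.mem_center_iff]
      intro g
      exact Subtype.ext (Subgroup.mem_center_iff.mp hx2 (g : G7))

end Tetra
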